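/- For every α with 0 < α < 1, ∫₀^∞ ln(1 - α(1 - x)) e^{-x} dx = ln(1 - α) + e^{(1-α)/α} E₁( (1-α)/α ). -/

import Mathlib

open MeasureTheory Real Set Filter

/-- Exponential integral `E₁(x) = ∫ₓ^∞ t⁻¹ e^{-t} dt`. -/
noncomputable def expInt (x : ℝ) : ℝ :=
  ∫ t in Set.Ioi x, Real.exp (-t) / t

lemma integrableOn_expInt {a : ℝ} (ha : 0 < a) :
    IntegrableOn (fun t => Real.exp (-t) / t) (Set.Ioi a) := by
  have hg : IntegrableOn (fun t => (1/a) * Real.exp (-t)) (Set.Ioi a) := by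
    have := (exp_neg_integrableOn_Ioi a (by norm_num : (0:ℝ) < 1)).const_mul (1/a)
    simp only [one_div, neg_mul, one_mul] at this ⊢; exact this
  refine hg.mono' ?_ ?_
  · refine (ContinuousOn.div ?_ ?_ ?_).aestronglyMeasurable measurableSet_Ioi
    · exact (Real.continuous_exp.comp continuous_neg).continuousOn
    · exact continuous_id.continuousOn
    · intro t ht; exact ne_of_gt (ha.trans ht)
  · filter_upwards [ae_restrict_mem measurableSet_Ioi] with t ht
    have ht' : a < t := ht
    rw [norm_div, Real.norm_eq_abs, Real.norm_eq_abs, abs_of_pos (Real.exp_pos _),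
      abs_of_pos (ha.trans ht')]
    rw [div_le_iff₀ (ha.trans ht')]
    have : Real.exp (-t) * a ≤ Real.exp (-t) * t :=
      mul_le_mul_of_nonneg_left ht'.le (Real.exp_pos _).le
    calc Real.exp (-t) = (1/a) * (Real.exp (-t) * a) := by field_simp
    _ ≤ (1/a) * (Real.exp (-t) * t) := by
        apply mul_le_mul_of_nonneg_left this; positivity
    _ = (1/a) * Real.exp (-t) * t := by ring

lemma expInt_split {a x : ℝ} (ha : 0 < a) (hax : a ≤ x) :
    expInt x = expInt a - ∫ t in a..x, Real.exp (-t) / t := by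
  have hI : IntegrableOn (fun t => Real.exp (-t) / t) (Set.Ioi a) := integrableOn_expInt ha
  have hsplit : (Set.Ioc a x) ∪ (Set.Ioi x) = Set.Ioi a := Set.Ioc_union_Ioi_eq_Ioi hax
  have hdisj : Disjoint (Set.Ioc a x) (Set.Ioi x) := by
    exact Set.Ioc_disjoint_Ioi le_rfl
  have := MeasureTheory.setIntegral_union hdisj measurableSet_Ioi
    (hI.mono_set (by rw [← hsplit]; exact Set.subset_union_left))
    (hI.mono_set (by rw [← hsplit]; exact Set.subset_union_right))
  rw [hsplit] at this
  rw [intervalIntegral.integral_of_le hax]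
  unfold expInt
  linarith [this]

lemma hasDerivAt_expInt {y : ℝ} (hy : 0 < y) :
    HasDerivAt expInt (-(Real.exp (-y) / y)) y := by
  set a := y / 2 with ha_def
  have ha : 0 < a := by positivity
  have hay : a < y := by simp [ha_def]; linarith
  have hF : HasDerivAt (fun x => expInt a - ∫ t in a..x, Real.exp (-t) / t)
      (-(Real.exp (-y) / y)) y := by
    have h1 : HasDerivAt (fun x => ∫ t in a..x, Real.exp (-t) / t)
        (Real.exp (-y) / y) y := by
      refine intervalIntegral.integral_hasDerivAt_right ?_ ?_ ?_
      · rw [intervalIntegrable_iff]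
        exact (integrableOn_expInt ha).mono_set (by
          rw [Set.uIoc_of_le hay.le]; exact Set.Ioc_subset_Ioi_self)
      · refine ContinuousAt.stronglyMeasurableAtFilter isOpen_Ioi ?_ y hy
        intro t ht
        exact ((Real.continuous_exp.comp continuous_neg).continuousAt).div
          continuousAt_id (ne_of_gt ht)
      · exact ((Real.continuous_exp.comp continuous_neg).continuousAt).div
          continuousAt_id (ne_of_gt hy)
    simpa using (h1.const_sub (expInt a))
  refine hF.congr_of_eventuallyEq ?_
  filter_upwards [Ioi_mem_nhds hay] with x hx
  exact expInt_split ha (le_of_lt hx)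

lemma expInt_nonneg {x : ℝ} (hx : 0 < x) : 0 ≤ expInt x := by
  apply MeasureTheory.setIntegral_nonneg measurableSet_Ioi
  intro t ht
  have : (0:ℝ) < t := hx.trans ht
  positivity

lemma expInt_le {x : ℝ} (hx : 1 ≤ x) : expInt x ≤ Real.exp (-x) := by
  have hx0 : (0:ℝ) < x := lt_of_lt_of_le one_pos hx
  have h1 : expInt x ≤ ∫ t in Set.Ioi x, Real.exp (-t) := by
    apply MeasureTheory.setIntegral_mono_on (integrableOn_expInt hx0)
      ((exp_neg_integrableOn_Ioi x (by norm_num : (0:ℝ) < 1)).congr_fun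
        (fun t _ => by norm_num) measurableSet_Ioi) measurableSet_Ioi
    intro t ht
    have ht1 : (1:ℝ) ≤ t := hx.trans (le_of_lt ht)
    rw [div_le_iff₀ (by linarith)]
    nlinarith [Real.exp_pos (-t)]
  rwa [integral_exp_neg_Ioi] at h1

lemma tendsto_expInt : Tendsto expInt atTop (nhds 0) := by
  apply squeeze_zero' (g := fun x => Real.exp (-x))
  · filter_upwards [eventually_gt_atTop (0:ℝ)] with x hx using expInt_nonneg hx
  · filter_upwards [eventually_ge_atTop (1:ℝ)] with x hx using expInt_le hx
  · exact Real.tendsto_exp_neg_atTop_nhds_zero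

/-- For every `0 < α < 1`,
`∫₀^∞ ln(1 - α(1-x)) e^{-x} dx = ln(1-α) + e^{(1-α)/α} E₁((1-α)/α)`. -/
theorem integral_log_rdr (α : ℝ) (hα0 : 0 < α) (hα1 : α < 1) :
    ∫ x in Set.Ioi (0 : ℝ), Real.log (1 - α * (1 - x)) * Real.exp (-x)
      = Real.log (1 - α) + Real.exp ((1 - α) / α) * expInt ((1 - α) / α) := by
  set c := (1 - α) / α with hc_def
  have hα : α ≠ 0 := ne_of_gt hα0
  have hc : 0 < c := div_pos (by linarith) hα0
  have hac : α * c = 1 - α := by rw [hc_def]; field_simp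
  have hrw : ∀ x : ℝ, 1 - α * (1 - x) = α * (x + c) := by
    intro x
    have : α * (x + c) = α * x + α * c := by ring
    rw [this, hac]; ring
  simp only [hrw]
  -- the antiderivative
  set F : ℝ → ℝ := fun x => -(Real.log (α * (x + c)) * Real.exp (-x))
      - Real.exp c * expInt (x + c) with hF_def
  have hderiv : ∀ x ∈ Set.Ici (0:ℝ),
      HasDerivAt F (Real.log (α * (x + c)) * Real.exp (-x)) x := by
    intro x hx
    have hx0 : (0:ℝ) ≤ x := hx
    have hxc : 0 < x + c := by linarith
    have hαxc : 0 < α * (x + c) := by positivity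
    have h1 : HasDerivAt (fun x : ℝ => α * (x + c)) α x := by
      simpa using ((hasDerivAt_id x).add_const c).const_mul α
    have h2 := h1.log (ne_of_gt hαxc)
    have h3 : HasDerivAt (fun x : ℝ => Real.exp (-x)) (-Real.exp (-x)) x := by
      simpa using ((hasDerivAt_id x).neg).exp
    have h4 := h2.mul h3
    have h5 : HasDerivAt (fun x : ℝ => expInt (x + c))
        (-(Real.exp (-(x + c)) / (x + c))) x := by
      exact HasDerivAt.comp_add_const x c (hasDerivAt_expInt hxc)
    have h6 := (h4.neg).sub (h5.const_mul (Real.exp c))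
    refine h6.congr_deriv ?_
    have hexp : Real.exp c * Real.exp (-(x + c)) = Real.exp (-x) := by
      rw [← Real.exp_add]; congr 1; ring
    have hA : α / (α * (x + c)) = 1 / (x + c) := by
      rw [div_eq_div_iff (by positivity) (by positivity)]; ring
    rw [hA]
    simp only [mul_neg, ← mul_div_assoc]
    rw [hexp]
    ring
  have htend : Tendsto F atTop (nhds 0) := by
    have ht2 : Tendsto (fun x => Real.exp c * expInt (x + c)) atTop (nhds 0) := by
      have := (tendsto_expInt.comp (tendsto_atTop_add_const_right atTop c tendsto_id)).const_mul
        (Real.exp c)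
      simpa using this
    have ht1 : Tendsto (fun x => Real.log (α * (x + c)) * Real.exp (-x)) atTop (nhds 0) := by
      apply squeeze_zero_norm' (a := fun x => (|Real.log α| + (x + c)) * Real.exp (-x))
      · filter_upwards [eventually_ge_atTop (1 - c), eventually_gt_atTop (0:ℝ)] with x hx hx0
        have hxc : (1:ℝ) ≤ x + c := by linarith
        have hxc0 : (0:ℝ) < x + c := by linarith
        rw [norm_mul, Real.norm_eq_abs, Real.norm_eq_abs, abs_of_pos (Real.exp_pos _)]
        apply mul_le_mul_of_nonneg_right _ (Real.exp_pos _).le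
        rw [Real.log_mul hα (ne_of_gt hxc0)]
        have hlog : |Real.log (x + c)| ≤ x + c := by
          rw [abs_of_nonneg (Real.log_nonneg hxc)]
          linarith [Real.log_le_sub_one_of_pos hxc0]
        calc |Real.log α + Real.log (x + c)| ≤ |Real.log α| + |Real.log (x + c)| := abs_add_le _ _
          _ ≤ |Real.log α| + (x + c) := by linarith
      · have hA : Tendsto (fun x : ℝ => |Real.log α| * Real.exp (-x)) atTop (nhds 0) := by
          simpa using (Real.tendsto_exp_neg_atTop_nhds_zero).const_mul |Real.log α|
        have hB : Tendsto (fun x : ℝ => x * Real.exp (-x)) atTop (nhds 0) := by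
          simpa using Real.tendsto_pow_mul_exp_neg_atTop_nhds_zero 1
        have hC : Tendsto (fun x : ℝ => c * Real.exp (-x)) atTop (nhds 0) := by
          simpa using (Real.tendsto_exp_neg_atTop_nhds_zero).const_mul c
        have := (hA.add hB).add hC
        simp only [add_zero] at this
        convert this using 2 with x
        ring
    have := ht1.neg.sub ht2
    simpa using this
  have hint : IntegrableOn (fun x => Real.log (α * (x + c)) * Real.exp (-x))
      (Set.Ioi (0:ℝ)) := by
    have hexpI : IntegrableOn (fun x : ℝ => Real.exp (-x)) (Set.Ioi 0) :=
      (exp_neg_integrableOn_Ioi 0 one_pos).congr_fun (fun x _ => by norm_num)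
        measurableSet_Ioi
    have hxexpI : IntegrableOn (fun x : ℝ => x * Real.exp (-x)) (Set.Ioi 0) := by
      have h := Real.GammaIntegral_convergent (s := 2) (by norm_num)
      apply h.congr_fun _ measurableSet_Ioi
      intro x hx
      simp only [show ((2:ℝ) - 1) = 1 by norm_num, Real.rpow_one]
      ring
    have hgI : IntegrableOn
        (fun x : ℝ => (|Real.log (α * c)| + x / c) * Real.exp (-x)) (Set.Ioi 0) := by
      have h2 : IntegrableOn (fun x : ℝ =>
          |Real.log (α * c)| * Real.exp (-x) + (1/c) * (x * Real.exp (-x))) (Set.Ioi 0) :=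
        (hexpI.const_mul |Real.log (α * c)|).add (hxexpI.const_mul (1/c))
      apply h2.congr_fun _ measurableSet_Ioi
      intro x hx; ring
    apply hgI.mono'
    · apply ContinuousOn.aestronglyMeasurable _ measurableSet_Ioi
      apply ContinuousOn.mul
      · apply ContinuousOn.log
        · exact (continuous_const.mul (continuous_id.add continuous_const)).continuousOn
        · intro x hx
          have : (0:ℝ) < x := hx
          positivity
      · exact (Real.continuous_exp.comp continuous_neg).continuousOn
    · filter_upwards [ae_restrict_mem measurableSet_Ioi] with x hx
      have hx0 : (0:ℝ) < x := hx
      have hxc : (0:ℝ) < x + c := by linarith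
      rw [norm_mul, Real.norm_eq_abs, Real.norm_eq_abs, abs_of_pos (Real.exp_pos _)]
      apply mul_le_mul_of_nonneg_right _ (Real.exp_pos _).le
      have hsplit : Real.log (α * (x + c)) = Real.log (α * c) + Real.log ((x + c) / c) := by
        rw [← Real.log_mul (by positivity) (by positivity)]
        congr 1; field_simp
      have h0 : 0 ≤ Real.log ((x + c) / c) :=
        Real.log_nonneg (by rw [le_div_iff₀ hc]; linarith)
      have h1 : Real.log ((x + c) / c) ≤ x / c := by
        have h := Real.log_le_sub_one_of_pos (show (0:ℝ) < (x + c) / c by positivity)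
        have : (x + c) / c - 1 = x / c := by field_simp; ring
        linarith
      calc |Real.log (α * (x + c))| = |Real.log (α * c) + Real.log ((x + c) / c)| := by
            rw [hsplit]
        _ ≤ |Real.log (α * c)| + |Real.log ((x + c) / c)| := abs_add_le _ _
        _ = |Real.log (α * c)| + Real.log ((x + c) / c) := by rw [abs_of_nonneg h0]
        _ ≤ |Real.log (α * c)| + x / c := by linarith
  have key := integral_Ioi_of_hasDerivAt_of_tendsto' hderiv hint htend
  have hF0 : F 0 = -Real.log (1 - α) - Real.exp c * expInt c := by
    have h00 : (0:ℝ) + c = c := zero_add c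
    simp only [hF_def, h00, neg_zero, Real.exp_zero, mul_one, hac]
  rw [key, hF0]
  ring
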